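/- arXiv:2505.09725 — 2 statements merged into one kernel-verified Lean document; each statement's English description precedes it below -/
import Mathlib

section
/- Let h be harmonic on a bounded open set γ, continuous on closure(γ), with h ≥ g on closure(γ) ∩ Λ for a continuous function g, and h = g* on ∂γ ∩ Λ, where g* ≥ sup g. Let X^x be Brownian motion started at x ∈ closure(γ) absorbed on ∂Λ, let τ be any stopping time with τ ≤ τ_{∂Λ}, and let τ_h be the first hitting time of ∂γ. Then h(X^x_{τ ∧ τ_h}) ≥ g(X^x_τ) almost surely. -/
open MeasureTheory ProbabilityTheory Metric
open scoped NNReal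

/-- A standard `d`-dimensional Brownian motion started at `y`. -/
structure IsBrownianMotion (d : ℕ) {Ω : Type*} [MeasureSpace Ω]
    (B : ℝ≥0 → Ω → EuclideanSpace ℝ (Fin d))
    (y : EuclideanSpace ℝ (Fin d)) : Prop where
  meas : ∀ t, Measurable (B t)
  start : ∀ ω, B 0 ω = y
  cont : ∀ ω, Continuous fun t => B t ω
  incr_law : ∀ s t : ℝ≥0, s ≤ t → ∀ i : Fin d,
    Measure.map (fun ω => (B t ω - B s ω) i) ℙ = gaussianReal 0 (t - s)
  indep : ∀ (n : ℕ) (t : Fin (n + 1) → ℝ≥0), Monotone t →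
    iIndepFun
      (fun p : Fin n × Fin d => fun ω => (B (t p.1.succ) ω - B (t p.1.castSucc) ω) p.2) ℙ

/-- `f` is harmonic on the open set `s`. -/
def IsHarmonicOn {d : ℕ} (f : EuclideanSpace ℝ (Fin d) → ℝ)
    (s : Set (EuclideanSpace ℝ (Fin d))) : Prop :=
  ContDiffOn ℝ 2 f s ∧ ∀ u ∈ s,
    ∑ i : Fin d, iteratedFDerivWithin ℝ 2 f s u
      ![EuclideanSpace.single i (1 : ℝ), EuclideanSpace.single i (1 : ℝ)] = 0

lemma stays_in_open {E : Type*} [TopologicalSpace E] {γ : Set E} (hγo : IsOpen γ)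
    {P : ℝ≥0 → E} (hP : Continuous P) (h0 : P 0 ∈ γ) (t : ℝ≥0)
    (hfr : ∀ s, s ≤ t → P s ∉ frontier γ) : P t ∈ γ := by
  by_contra ht
  have hC : IsClosed {s : ℝ≥0 | P s ∉ γ} := (hγo.preimage hP).isClosed_compl
  have hne : Set.Nonempty {s : ℝ≥0 | P s ∉ γ} := ⟨t, ht⟩
  have hu_mem : sInf {s : ℝ≥0 | P s ∉ γ} ∈ {s : ℝ≥0 | P s ∉ γ} :=
    hC.csInf_mem hne (OrderBot.bddBelow _)
  set u := sInf {s : ℝ≥0 | P s ∉ γ} with hu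
  have hut : u ≤ t := csInf_le (OrderBot.bddBelow _) ht
  have hu0 : u ≠ 0 := by
    intro h
    rw [h] at hu_mem
    exact hu_mem h0
  have hlt : ∀ s, s < u → P s ∈ γ := by
    intro s hs
    by_contra hns
    have : u ≤ s := csInf_le (OrderBot.bddBelow _) hns
    exact absurd this (not_le.2 hs)
  have hne' : Set.Nonempty (Set.Iio u) := ⟨0, zero_lt_iff.2 hu0⟩
  haveI hnb : Filter.NeBot (nhdsWithin u (Set.Iio u)) := nhdsWithin_Iio_self_neBot' hne'
  have htend : Filter.Tendsto P (nhdsWithin u (Set.Iio u)) (nhds (P u)) :=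
    (hP.tendsto u).mono_left nhdsWithin_le_nhds
  have hev : ∀ᶠ s in nhdsWithin u (Set.Iio u), P s ∈ γ :=
    Filter.eventually_of_mem self_mem_nhdsWithin (fun s hs => hlt s hs)
  have hcl : P u ∈ closure γ := mem_closure_of_tendsto htend hev
  refine hfr u hut ?_
  rw [hγo.frontier_eq]
  exact ⟨hcl, hu_mem⟩

/-- one-sided excessivity, pathwise form:
`h(X^x_{τ ∧ τ_h}) ≥ g(X^x_τ)` almost surely. -/
theorem one_sided_excessivity_pathwise {d : ℕ} (hd : 2 ≤ d)
    {Ω : Type*} [MeasureSpace Ω] [IsProbabilityMeasure (ℙ : Measure Ω)]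
    (ℱ : Filtration ℝ≥0 (inferInstance : MeasurableSpace Ω))
    (B : ℝ≥0 → Ω → EuclideanSpace ℝ (Fin d)) (hB : IsBrownianMotion d B 0)
    (hBadapted : Adapted ℱ B)
    -- absorbed Brownian motion started at `x`
    (τΛ : EuclideanSpace ℝ (Fin d) → Ω → ℝ≥0)
    (hτΛ : ∀ x ω, τΛ x ω = sInf {t : ℝ≥0 | ‖x + B t ω‖ = 1})
    (X : EuclideanSpace ℝ (Fin d) → ℝ≥0 → Ω → EuclideanSpace ℝ (Fin d))
    (hX : ∀ x t ω, X x t ω = x + B (min t (τΛ x ω)) ω)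
    -- the gain function
    (g : EuclideanSpace ℝ (Fin d) → ℝ) (hgc : Continuous g) (hg0 : ∀ u, 0 ≤ g u)
    (hsupp : IsCompact (tsupport g))
    (hsuppΛ : tsupport g ⊆ ball (0 : EuclideanSpace ℝ (Fin d)) 1)
    (gstar : ℝ) (hgs : ∀ u, g u ≤ gstar)
    -- the harmonic patch on γ, with free boundary value g*
    (γ : Set (EuclideanSpace ℝ (Fin d))) (hγo : IsOpen γ)
    (hγΛ : γ ⊆ ball (0 : EuclideanSpace ℝ (Fin d)) 1)
    (h : EuclideanSpace ℝ (Fin d) → ℝ)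
    (hharm : IsHarmonicOn h γ) (hcont : ContinuousOn h (closure γ))
    (hpos : ∀ u ∈ closure γ, 0 ≤ h u)
    (hhg : ∀ u ∈ closure γ ∩ ball (0 : EuclideanSpace ℝ (Fin d)) 1, g u ≤ h u)
    (hfree : ∀ u ∈ frontier γ ∩ ball (0 : EuclideanSpace ℝ (Fin d)) 1, h u = gstar)
    -- start point and stopping times
    (x : EuclideanSpace ℝ (Fin d)) (hxγ : x ∈ closure γ)
    (τ : Ω → ℝ≥0) (hτstop : IsStoppingTime ℱ (fun ω => ((τ ω : ℝ≥0) : WithTop ℝ≥0))) (hτle : ∀ ω, τ ω ≤ τΛ x ω)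
    (τh : Ω → ℝ≥0) (hτh : ∀ ω, τh ω = sInf {t : ℝ≥0 | X x t ω ∈ frontier γ}) :
    ∀ᵐ ω, g (X x (τ ω) ω) ≤ h (X x (min (τ ω) (τh ω)) ω) := by
  refine Filter.Eventually.of_forall fun ω => ?_
  have hXfun : (fun t : ℝ≥0 => X x t ω) = fun t => x + B (min t (τΛ x ω)) ω :=
    funext fun t => hX x t ω
  have hPcont : Continuous fun t : ℝ≥0 => X x t ω := by
    rw [hXfun]
    exact continuous_const.add ((hB.cont ω).comp (continuous_id.min continuous_const))
  have hX0 : X x 0 ω = x := by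
    rw [hX, min_eq_left (zero_le), hB.start, add_zero]
  have hclγ : closure γ ⊆ closedBall (0 : EuclideanSpace ℝ (Fin d)) 1 :=
    closure_minimal (hγΛ.trans ball_subset_closedBall) isClosed_closedBall
  have hgball : ∀ u : EuclideanSpace ℝ (Fin d),
      u ∉ ball (0 : EuclideanSpace ℝ (Fin d)) 1 → g u = 0 :=
    fun u hu => image_eq_zero_of_notMem_tsupport (fun hmem => hu (hsuppΛ hmem))
  by_cases hS : {t : ℝ≥0 | X x t ω ∈ frontier γ}.Nonempty
  · -- the path hits the frontier of γ
    have hSc : IsClosed {t : ℝ≥0 | X x t ω ∈ frontier γ} :=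
      isClosed_frontier.preimage hPcont
    have hτh_mem : X x (τh ω) ω ∈ frontier γ := by
      rw [hτh]; exact hSc.csInf_mem hS (OrderBot.bddBelow _)
    rcases le_or_gt (τh ω) (τ ω) with hle | hlt
    · -- frontier hit before τ
      rw [min_eq_right hle]
      by_cases hyb : X x (τh ω) ω ∈ ball (0 : EuclideanSpace ℝ (Fin d)) 1
      · rw [hfree _ ⟨hτh_mem, hyb⟩]
        exact hgs _
      · -- frontier hit on the unit sphere: forces τ = τh = τΛ
        have hycl : X x (τh ω) ω ∈ closure γ := frontier_subset_closure (s := γ) hτh_mem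
        have hτhT : τh ω ≤ τΛ x ω := hle.trans (hτle ω)
        have hyB : X x (τh ω) ω = x + B (τh ω) ω := by
          rw [hX, min_eq_left hτhT]
        have hy1 : ‖x + B (τh ω) ω‖ = 1 := by
          rw [← hyB]
          have h1 : ‖X x (τh ω) ω‖ ≤ 1 := mem_closedBall_zero_iff.1 (hclγ hycl)
          have h2 : ¬ ‖X x (τh ω) ω‖ < 1 := fun hc => hyb (mem_ball_zero_iff.2 hc)
          linarith [not_lt.1 h2]
        have hTle : τΛ x ω ≤ τh ω := by
          rw [hτΛ]; exact csInf_le (OrderBot.bddBelow _) hy1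
        have hττh : τ ω = τh ω := le_antisymm ((hτle ω).trans hTle) hle
        rw [hττh]
        calc g (X x (τh ω) ω) = 0 := hgball _ hyb
          _ ≤ h (X x (τh ω) ω) := hpos _ hycl
    · -- τ before the frontier hit: the path is still inside γ
      rw [min_eq_left hlt.le]
      have hnofr : ∀ s, s ≤ τ ω → X x s ω ∉ frontier γ := by
        intro s hs hmem
        have h1 : τh ω ≤ s := by
          rw [hτh]; exact csInf_le (OrderBot.bddBelow _) hmem
        exact absurd (h1.trans hs) (not_le.2 hlt)
      have hxγ' : x ∈ γ := by
        by_contra hxn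
        exact hnofr 0 (zero_le) (by rw [hX0, hγo.frontier_eq]; exact ⟨hxγ, hxn⟩)
      have hmem : X x (τ ω) ω ∈ γ :=
        stays_in_open hγo hPcont (by rw [hX0]; exact hxγ') (τ ω) hnofr
      exact hhg _ ⟨subset_closure hmem, hγΛ hmem⟩
  · -- the path never hits the frontier of γ: then it never moved at all
    have hτh0 : τh ω = 0 := by
      rw [hτh, Set.not_nonempty_iff_eq_empty.1 hS]
      simp
    have hxγ' : x ∈ γ := by
      by_contra hxn
      exact hS ⟨0, by rw [Set.mem_setOf_eq, hX0, hγo.frontier_eq]; exact ⟨hxγ, hxn⟩⟩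
    have hstay : ∀ t, X x t ω ∈ γ := fun t =>
      stays_in_open hγo hPcont (by rw [hX0]; exact hxγ') t
        (fun s _ hmem => hS ⟨s, hmem⟩)
    have hTempty : {t : ℝ≥0 | ‖x + B t ω‖ = 1} = ∅ := by
      by_contra hne
      have hne' : Set.Nonempty {t : ℝ≥0 | ‖x + B t ω‖ = 1} :=
        Set.nonempty_iff_ne_empty.2 hne
      have hcl : IsClosed {t : ℝ≥0 | ‖x + B t ω‖ = 1} :=
        isClosed_eq (continuous_const.add (hB.cont ω)).norm continuous_const
      have hmem := hcl.csInf_mem hne' (OrderBot.bddBelow _)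
      have h1 : ‖X x (τΛ x ω) ω‖ = 1 := by
        rw [hX, min_self, hτΛ]
        exact hmem
      have h2 : ‖X x (τΛ x ω) ω‖ < 1 := mem_ball_zero_iff.1 (hγΛ (hstay _))
      exact absurd h1 (ne_of_lt h2)
    have hτ0 : τ ω = 0 := by
      have hT0 : τΛ x ω = 0 := by rw [hτΛ, hTempty]; simp
      exact le_antisymm (hT0 ▸ hτle ω) (zero_le)
    rw [hτ0, hτh0, min_self, hX0]
    exact hhg x ⟨hxγ, hγΛ hxγ'⟩
end

section
/- The limit envelope equals the envelope over the full branched class: for each x ∈ Λ, inf_{n∈ℕ} w_n(x) = lim_{ε→0} inf{h(x) : h ∈ H_∞, h ≥ g, ‖h‖ < ε}, where w_n(x) = lim_{ε→0} inf{h(x) : h ∈ H_n, h ≥ g, ‖h‖ < ε} and H_∞ = ⋃_n H_n. -/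
open scoped Classical
open Metric

noncomputable section

/-- A harmonic patch: a domain together with the values of its harmonic extension. -/
structure Patch (d : ℕ) where
  dom : Set (EuclideanSpace ℝ (Fin d))
  f : EuclideanSpace ℝ (Fin d) → ℝ

/-- Branched harmonic majorants: a base patch, together with (at positive depth) a
branched extension attaching a branched majorant at each interior boundary point. -/
inductive BHM (d : ℕ) : Type
  | base : Patch d → BHM d
  | node : Patch d → (EuclideanSpace ℝ (Fin d) → BHM d) → BHM d

namespace BHM

variable {d : ℕ}

/-- The base patch of a branched harmonic majorant. -/
def patch : BHM d → Patch d
  | base p => p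
  | node p _ => p

/-- The base domain `d(h)`. -/
def dom (h : BHM d) : Set (EuclideanSpace ℝ (Fin d)) := h.patch.dom

/-- Pointwise evaluation on the base domain. -/
def eval (h : BHM d) : EuclideanSpace ℝ (Fin d) → ℝ := h.patch.f

/-- The interior boundary `∂₀`: boundary points inside `Λ` at which the value
is strictly below the truncation level `g*`. -/
def intBdry (gstar : ℝ) (p : Patch d) : Set (EuclideanSpace ℝ (Fin d)) :=
  {u ∈ frontier p.dom | ‖u‖ < 1 ∧ p.f u < gstar}

/-- The matching error `Δ(h)`. -/
def matchErr (gstar : ℝ) : BHM d → ℝ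
  | base _ => 0
  | node p κ => ⨆ v : intBdry gstar p, |p.f v.1 - (κ v.1).eval v.1|

/-- The matching-error norm `‖h‖`. -/
def bnorm (gstar : ℝ) : BHM d → ℝ
  | base _ => 0
  | node p κ => (⨆ v : intBdry gstar p, |p.f v.1 - (κ v.1).eval v.1|) +
      ⨆ v : intBdry gstar p, bnorm gstar (κ v.1)

/-- `h ≥ g`, recursively: the base patch dominates `g` on its closed domain and
every attached branched majorant dominates `g`. -/
def Dominates (g : EuclideanSpace ℝ (Fin d) → ℝ) (gstar : ℝ) : BHM d → Prop
  | base p => ∀ u ∈ closure p.dom, g u ≤ p.f u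
  | node p κ => (∀ u ∈ closure p.dom, g u ≤ p.f u) ∧
      ∀ v ∈ intBdry gstar p, Dominates g gstar (κ v)

/-- Membership in `H_n` (branching depth at most `n − 1`). -/
inductive Depth (gstar : ℝ) : BHM d → ℕ → Prop
  | base (p : Patch d) (n : ℕ) : Depth gstar (BHM.base p) (n + 1)
  | node (p : Patch d) (κ : EuclideanSpace ℝ (Fin d) → BHM d) (n : ℕ)
      (h : ∀ v ∈ intBdry gstar p, Depth gstar (κ v) n) :
      Depth gstar (BHM.node p κ) (n + 1)

/-- Conditions for a patch to belong to the base class `H₀`: smoothly realised as an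
open subdomain of the unit ball, with `M`-Lipschitz harmonic values truncated at `g*`. -/
def ValidPatch (M gstar : ℝ) (p : Patch d) : Prop :=
  IsOpen p.dom ∧ p.dom ⊆ ball (0 : EuclideanSpace ℝ (Fin d)) 1 ∧
  IsHarmonicOn p.f p.dom ∧ ContinuousOn p.f (closure p.dom) ∧
  LipschitzOnWith (Real.toNNReal M) p.f (closure p.dom) ∧
  ∀ u ∈ closure p.dom, p.f u ≤ gstar

/-- Membership conditions for the classes `H_n`: every patch is valid, unbranched
majorants take the value `g*` on their free boundary inside `Λ`, and branched
extensions are contiguous (`v ∈ d(κ_v)`). -/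
def Valid (M gstar : ℝ) : BHM d → Prop
  | base p => ValidPatch M gstar p ∧
      ∀ u ∈ frontier p.dom ∩ ball (0 : EuclideanSpace ℝ (Fin d)) 1, p.f u = gstar
  | node p κ => ValidPatch M gstar p ∧
      ∀ v ∈ intBdry gstar p, v ∈ (κ v).dom ∧ Valid M gstar (κ v)

end BHM

/-- Evaluation extended by `+∞` off the closed base domain. -/
noncomputable def BHM.evalE {d : ℕ} (h : BHM d) (x : EuclideanSpace ℝ (Fin d)) : EReal :=
  if x ∈ closure h.dom then ((h.eval x : ℝ) : EReal) else ⊤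

/-- The admissible class at depth `≤ n` and matching error `< ε`. -/
def admissible {d : ℕ} (g : EuclideanSpace ℝ (Fin d) → ℝ) (gstar M : ℝ)
    (n : ℕ) (ε : ℝ) : Set (BHM d) :=
  {h | BHM.Valid M gstar h ∧ BHM.Depth gstar h n ∧ BHM.Dominates g gstar h ∧
    BHM.bnorm gstar h < ε}

/-- The admissible class over the full branched family `H_∞ = ⋃ n H_n`. -/
def admissibleInfty {d : ℕ} (g : EuclideanSpace ℝ (Fin d) → ℝ) (gstar M : ℝ)
    (ε : ℝ) : Set (BHM d) :=
  {h | BHM.Valid M gstar h ∧ (∃ n, BHM.Depth gstar h n) ∧ BHM.Dominates g gstar h ∧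
    BHM.bnorm gstar h < ε}

section Aux

open Topology Filter

namespace BHM

variable {d : ℕ}

theorem patch_base (p : Patch d) : (base p).patch = p := rfl
theorem patch_node (p : Patch d) (κ) : (node p κ).patch = p := rfl

theorem dominates_eval {g : EuclideanSpace ℝ (Fin d) → ℝ} {gstar : ℝ} {h : BHM d}
    (hdm : Dominates g gstar h) : ∀ u ∈ closure h.dom, g u ≤ h.eval u := by
  cases h with
  | base p => exact hdm
  | node p κ => exact hdm.1

theorem valid_validPatch {M gstar : ℝ} {h : BHM d} (hv : Valid M gstar h) :
    ValidPatch M gstar h.patch := by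
  cases h with
  | base p => exact hv.1
  | node p κ => exact hv.1

theorem eval_le_gstar {M gstar : ℝ} {h : BHM d} (hv : Valid M gstar h) :
    ∀ u ∈ closure h.dom, h.eval u ≤ gstar :=
  (valid_validPatch hv).2.2.2.2.2

theorem bnorm_nonneg (gstar : ℝ) (h : BHM d) : 0 ≤ bnorm gstar h := by
  induction h with
  | base p => simp [bnorm]
  | node p κ ih =>
    have h1 : 0 ≤ ⨆ v : intBdry gstar p, |p.f v.1 - (κ v.1).eval v.1| :=
      Real.iSup_nonneg fun v => abs_nonneg _
    have h2 : 0 ≤ ⨆ v : intBdry gstar p, bnorm gstar (κ v.1) :=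
      Real.iSup_nonneg fun v => ih v.1
    simp only [bnorm]
    linarith

theorem Depth.pos {gstar : ℝ} {h : BHM d} {n : ℕ} (hd : Depth gstar h n) :
    ∃ m, n = m + 1 := by
  cases hd <;> exact ⟨_, rfl⟩

/-- Pointwise bounds used to control the suprema in `bnorm`. -/
theorem abs_match_le {g : EuclideanSpace ℝ (Fin d) → ℝ} {gstar M : ℝ}
    (hg0 : ∀ u, 0 ≤ g u) {p : Patch d} {κ : EuclideanSpace ℝ (Fin d) → BHM d}
    (hv : Valid M gstar (node p κ)) (hdm : Dominates g gstar (node p κ)) :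
    ∀ v ∈ intBdry gstar p, |p.f v - (κ v).eval v| ≤ gstar := by
  intro v hv0
  have hvcl : v ∈ closure p.dom := frontier_subset_closure hv0.1
  have h1 : 0 ≤ p.f v := le_trans (hg0 v) (hdm.1 v hvcl)
  have h2 : p.f v ≤ gstar := hv.1.2.2.2.2.2 v hvcl
  have hκd : v ∈ (κ v).dom := (hv.2 v hv0).1
  have hκcl : v ∈ closure (κ v).dom := subset_closure hκd
  have h3 : 0 ≤ (κ v).eval v := le_trans (hg0 v) (dominates_eval (hdm.2 v hv0) v hκcl)
  have h4 : (κ v).eval v ≤ gstar := eval_le_gstar (hv.2 v hv0).2 v hκcl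
  rw [abs_sub_le_iff]
  constructor <;> linarith

/-- The matching-error norm of a depth-`n` admissible majorant is at most `n·g*`. -/
theorem bnorm_le_depth {g : EuclideanSpace ℝ (Fin d) → ℝ} {gstar M : ℝ}
    (hg0 : ∀ u, 0 ≤ g u) (hgs0 : 0 ≤ gstar) :
    ∀ {h : BHM d} {n : ℕ}, Depth gstar h n → Valid M gstar h →
      Dominates g gstar h → bnorm gstar h ≤ n * gstar := by
  intro h n hdep
  induction hdep with
  | base p n =>
    intro _ _
    simp only [bnorm]
    positivity
  | node p κ n hchild ih =>
    intro hv hdm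
    have hA : (⨆ v : intBdry gstar p, |p.f v.1 - (κ v.1).eval v.1|) ≤ gstar :=
      Real.iSup_le (fun v => abs_match_le hg0 hv hdm v.1 v.2) hgs0
    have hB : (⨆ v : intBdry gstar p, bnorm gstar (κ v.1)) ≤ n * gstar :=
      Real.iSup_le (fun v => ih v.1 v.2 (hv.2 v.1 v.2).2 (hdm.2 v.1 v.2)) (by positivity)
    simp only [bnorm]
    push_cast
    nlinarith

/-- The regularised patch: shift the values up by `c` and truncate the domain at `g*`. -/
def regP (gstar c : ℝ) (p : Patch d) : Patch d :=
  ⟨{u ∈ p.dom | p.f u + c < gstar}, fun u => p.f u + c⟩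

theorem regP_dom_subset {gstar c : ℝ} {p : Patch d} : (regP gstar c p).dom ⊆ p.dom :=
  fun _ hu => hu.1

theorem regP_dom_eq (gstar c : ℝ) (p : Patch d) :
    (regP gstar c p).dom = p.dom ∩ p.f ⁻¹' (Set.Iio (gstar - c)) := by
  ext u
  simp only [regP, Set.mem_sep_iff, Set.mem_inter_iff, Set.mem_preimage, Set.mem_Iio]
  constructor
  · rintro ⟨h1, h2⟩; exact ⟨h1, by linarith⟩
  · rintro ⟨h1, h2⟩; exact ⟨h1, by linarith⟩

theorem isOpen_regP {gstar M : ℝ} {p : Patch d} (hp : ValidPatch M gstar p) (c : ℝ) :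
    IsOpen (regP gstar c p).dom := by
  rw [regP_dom_eq]
  exact (hp.2.2.2.1.mono subset_closure).isOpen_inter_preimage hp.1 isOpen_Iio

theorem regP_le {gstar M : ℝ} {p : Patch d} (hp : ValidPatch M gstar p) (c : ℝ) :
    ∀ u ∈ closure (regP gstar c p).dom, p.f u + c ≤ gstar := by
  have hcl : closure (regP gstar c p).dom ⊆
      closure p.dom ∩ p.f ⁻¹' (Set.Iic (gstar - c)) := by
    refine closure_minimal (fun u hu => ⟨subset_closure hu.1, ?_⟩)
      (hp.2.2.2.1.preimage_isClosed_of_isClosed isClosed_closure isClosed_Iic)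
    have := hu.2
    simp only [Set.mem_preimage, Set.mem_Iic]
    linarith
  intro u hu
  have := (hcl hu).2
  simp only [Set.mem_preimage, Set.mem_Iic] at this
  linarith

theorem validPatch_regP {gstar M c : ℝ} {p : Patch d} (hp : ValidPatch M gstar p)
    (hc : 0 ≤ c) : ValidPatch M gstar (regP gstar c p) := by
  obtain ⟨hop0, hsubball, hharm, hcont, hlip, hbd⟩ := hp
  have hp' : ValidPatch M gstar p := ⟨hop0, hsubball, hharm, hcont, hlip, hbd⟩
  have hop := isOpen_regP hp' c
  have hsub : (regP gstar c p).dom ⊆ p.dom := regP_dom_subset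
  have hclsub : closure (regP gstar c p).dom ⊆ closure p.dom := closure_mono hsub
  refine ⟨hop, fun u hu => hsubball hu.1, ?_, ?_, ?_, regP_le hp' c⟩
  · -- harmonicity
    have hcd2 : ContDiffOn ℝ 2 (fun u => p.f u + c) (regP gstar c p).dom :=
      (hharm.1.add contDiffOn_const).mono hsub
    refine ⟨hcd2, fun u hu => ?_⟩
    have huniq : UniqueDiffOn ℝ (regP gstar c p).dom := hop.uniqueDiffOn
    have h1 : iteratedFDerivWithin ℝ 2 (regP gstar c p).f (regP gstar c p).dom u
        = iteratedFDerivWithin ℝ 2 p.f (regP gstar c p).dom u := by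
      have hconst : ContDiffOn ℝ 2 (fun _ : EuclideanSpace ℝ (Fin d) => c)
          (regP gstar c p).dom := contDiffOn_const
      have hadd := iteratedFDerivWithin_add_apply' (𝕜 := ℝ) (i := 2)
        (hharm.1.mono hsub u hu) (hconst u hu) huniq hu
      have hzero : iteratedFDerivWithin ℝ 2 (fun _ : EuclideanSpace ℝ (Fin d) => c)
          (regP gstar c p).dom u = 0 :=
        congrFun (iteratedFDerivWithin_const_of_ne two_ne_zero c _) u
      show iteratedFDerivWithin ℝ 2 (fun u => p.f u + c) (regP gstar c p).dom u = _
      rw [hadd, hzero, add_zero]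
    have h2 : iteratedFDerivWithin ℝ 2 p.f (regP gstar c p).dom u
        = iteratedFDerivWithin ℝ 2 p.f p.dom u := by
      conv_lhs => rw [← Set.inter_eq_self_of_subset_right hsub]
      exact iteratedFDerivWithin_inter_open hop hu
    simp_rw [h1, h2]
    exact hharm.2 u (hsub hu)
  · exact (hcont.mono hclsub).add continuousOn_const
  · intro u hu v hv
    have := hlip (hclsub hu) (hclsub hv)
    simpa [regP, edist_add_right] using this

theorem frontier_regP {gstar M c : ℝ} {p : Patch d} (hp : ValidPatch M gstar p)
    {u : EuclideanSpace ℝ (Fin d)} (hu : u ∈ frontier (regP gstar c p).dom)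
    (hlt : p.f u + c < gstar) : u ∈ frontier p.dom := by
  have hop := isOpen_regP hp c
  have hucl : u ∈ closure (regP gstar c p).dom := frontier_subset_closure hu
  have hnot : u ∉ (regP gstar c p).dom := by
    rw [hop.frontier_eq] at hu
    exact hu.2
  have hnotdom : u ∉ p.dom := fun hm => hnot ⟨hm, hlt⟩
  rw [hp.1.frontier_eq]
  exact ⟨closure_mono regP_dom_subset hucl, hnotdom⟩

theorem intBdry_regP {gstar M c : ℝ} {p : Patch d} (hp : ValidPatch M gstar p)
    (hc : 0 ≤ c) : intBdry gstar (regP gstar c p) ⊆ intBdry gstar p := by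
  intro u hu
  obtain ⟨hfr, hn, hlt⟩ := hu
  have hlt' : p.f u + c < gstar := hlt
  exact ⟨frontier_regP hp hfr hlt', hn, by linarith⟩

theorem regP_boundary {gstar M c : ℝ} {p : Patch d} (hp : ValidPatch M gstar p)
    (hbase : ∀ u ∈ frontier p.dom ∩ ball (0 : EuclideanSpace ℝ (Fin d)) 1, p.f u = gstar)
    (hc : 0 ≤ c) :
    ∀ u ∈ frontier (regP gstar c p).dom ∩ ball (0 : EuclideanSpace ℝ (Fin d)) 1,
      (regP gstar c p).f u = gstar := by
  rintro u ⟨hufr, hub⟩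
  have hle : p.f u + c ≤ gstar := regP_le hp c u (frontier_subset_closure hufr)
  rcases eq_or_lt_of_le hle with heq | hlt
  · exact heq
  · have h1 : u ∈ frontier p.dom := frontier_regP hp hufr hlt
    have h2 : p.f u = gstar := hbase u ⟨h1, hub⟩
    show p.f u + c = gstar
    have : p.f u < gstar := by linarith
    linarith

theorem mem_closure_regP {gstar M c : ℝ} {p : Patch d} (hp : ValidPatch M gstar p)
    {x : EuclideanSpace ℝ (Fin d)} (hx : x ∈ closure p.dom)
    (hlt : p.f x + c < gstar) : x ∈ closure (regP gstar c p).dom := by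
  rw [mem_closure_iff_nhdsWithin_neBot] at hx ⊢
  have hS' : p.f ⁻¹' (Set.Iio (gstar - c)) ∈ 𝓝[closure p.dom] x := by
    refine (hp.2.2.2.1 x (mem_closure_iff_nhdsWithin_neBot.mpr hx)).preimage_mem_nhdsWithin ?_
    exact Iio_mem_nhds (by linarith)
  have hS : p.f ⁻¹' (Set.Iio (gstar - c)) ∈ 𝓝[p.dom] x :=
    nhdsWithin_mono x subset_closure hS'
  rw [regP_dom_eq, nhdsWithin_inter_of_mem' hS]
  exact hx

/-- Continuous regularisation: shift the whole branched majorant up (adjusting the shift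
along each branch so that the branches match exactly), truncating all domains at `g*`. -/
def reg (gstar : ℝ) : BHM d → ℝ → BHM d
  | base p, c => base (regP gstar c p)
  | node p κ, c => node (regP gstar c p)
      (fun v => reg gstar (κ v) (c + p.f v - (κ v).eval v))

theorem dom_reg (gstar : ℝ) (h : BHM d) (c : ℝ) :
    (reg gstar h c).dom = {u ∈ h.dom | h.eval u + c < gstar} := by
  cases h <;> rfl

theorem eval_reg (gstar : ℝ) (h : BHM d) (c : ℝ) :
    (reg gstar h c).eval = fun u => h.eval u + c := by
  cases h <;> rfl

/-- The continuous regularisation lemma: `reg` applied with any `c ≥ ‖h‖` produces an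
admissible branched majorant of the same depth with vanishing matching-error norm,
still dominating `g`, with values `h + c`. -/
theorem reg_spec {g : EuclideanSpace ℝ (Fin d) → ℝ} {gstar M : ℝ}
    (hg0 : ∀ u, 0 ≤ g u) (hgs0 : 0 ≤ gstar) :
    ∀ {h : BHM d} {n : ℕ}, Depth gstar h n → Valid M gstar h → Dominates g gstar h →
      ∀ c : ℝ, 0 ≤ c → bnorm gstar h ≤ c →
      Valid M gstar (reg gstar h c) ∧ Dominates g gstar (reg gstar h c) ∧
        Depth gstar (reg gstar h c) n ∧ bnorm gstar (reg gstar h c) = 0 := by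
  intro h n hdep
  induction hdep with
  | base p n =>
    intro hv hdm c hc _
    refine ⟨⟨validPatch_regP hv.1 hc, regP_boundary hv.1 hv.2 hc⟩, ?_, ?_, ?_⟩
    · intro u hu
      have := hdm u (closure_mono regP_dom_subset hu)
      show g u ≤ p.f u + c
      linarith
    · exact Depth.base _ n
    · simp [reg, bnorm]
  | node p κ n hchild ih =>
    intro hv hdm c hc hbn
    obtain ⟨hvp, hvchild⟩ := hv
    obtain ⟨hdmp, hdmchild⟩ := hdm
    have hvnode : Valid M gstar (node p κ) := ⟨hvp, hvchild⟩
    have hdmnode : Dominates g gstar (node p κ) := ⟨hdmp, hdmchild⟩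
    have hbnodeq : bnorm gstar (node p κ)
        = (⨆ v : intBdry gstar p, |p.f v.1 - (κ v.1).eval v.1|)
          + ⨆ v : intBdry gstar p, bnorm gstar (κ v.1) := rfl
    have hbddΔ : BddAbove (Set.range fun v : intBdry gstar p =>
        |p.f v.1 - (κ v.1).eval v.1|) := by
      refine ⟨gstar, ?_⟩
      rintro _ ⟨v, rfl⟩
      exact abs_match_le hg0 hvnode hdmnode v.1 v.2
    have hbddS : BddAbove (Set.range fun v : intBdry gstar p => bnorm gstar (κ v.1)) := by
      refine ⟨n * gstar, ?_⟩
      rintro _ ⟨v, rfl⟩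
      exact bnorm_le_depth hg0 hgs0 (hchild v.1 v.2) (hvchild v.1 v.2).2 (hdmchild v.1 v.2)
    have hkey : ∀ v ∈ intBdry gstar p,
        bnorm gstar (κ v) ≤ c + p.f v - (κ v).eval v ∧
          0 ≤ c + p.f v - (κ v).eval v := by
      intro v hv0
      have e1 : |p.f v - (κ v).eval v|
          ≤ ⨆ v : intBdry gstar p, |p.f v.1 - (κ v.1).eval v.1| :=
        le_ciSup hbddΔ (⟨v, hv0⟩ : intBdry gstar p)
      have e2 : bnorm gstar (κ v) ≤ ⨆ v : intBdry gstar p, bnorm gstar (κ v.1) :=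
        le_ciSup hbddS (⟨v, hv0⟩ : intBdry gstar p)
      have e3 : (⨆ v : intBdry gstar p, |p.f v.1 - (κ v.1).eval v.1|)
          + (⨆ v : intBdry gstar p, bnorm gstar (κ v.1)) ≤ c := by
        rw [← hbnodeq]; exact hbn
      have e4 : 0 ≤ bnorm gstar (κ v) := bnorm_nonneg _ _
      have e5 : -|p.f v - (κ v).eval v| ≤ p.f v - (κ v).eval v := neg_abs_le _
      constructor <;> linarith
    have hIH : ∀ v ∈ intBdry gstar p,
        Valid M gstar (reg gstar (κ v) (c + p.f v - (κ v).eval v)) ∧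
        Dominates g gstar (reg gstar (κ v) (c + p.f v - (κ v).eval v)) ∧
        Depth gstar (reg gstar (κ v) (c + p.f v - (κ v).eval v)) n ∧
        bnorm gstar (reg gstar (κ v) (c + p.f v - (κ v).eval v)) = 0 :=
      fun v hv0 => ih v hv0 (hvchild v hv0).2 (hdmchild v hv0) _
        (hkey v hv0).2 (hkey v hv0).1
    have hsubB : intBdry gstar (regP gstar c p) ⊆ intBdry gstar p := intBdry_regP hvp hc
    refine ⟨⟨validPatch_regP hvp hc, ?_⟩, ⟨?_, ?_⟩, ?_, ?_⟩
    · -- validity of branches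
      intro v hv0
      have hv1 := hsubB hv0
      refine ⟨?_, (hIH v hv1).1⟩
      rw [dom_reg]
      refine ⟨(hvchild v hv1).1, ?_⟩
      have : (regP gstar c p).f v < gstar := hv0.2.2
      have h2 : p.f v + c < gstar := this
      show (κ v).eval v + (c + p.f v - (κ v).eval v) < gstar
      linarith
    · -- domination, base patch
      intro u hu
      have := hdmp u (closure_mono regP_dom_subset hu)
      show g u ≤ p.f u + c
      linarith
    · -- domination, branches
      exact fun v hv0 => (hIH v (hsubB hv0)).2.1
    · -- depth
      exact Depth.node _ _ n fun v hv0 => (hIH v (hsubB hv0)).2.2.1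
    · -- vanishing matching-error norm
      have hA : (⨆ v : intBdry gstar (regP gstar c p),
          |(regP gstar c p).f v.1 -
            ((fun v => reg gstar (κ v) (c + p.f v - (κ v).eval v)) v.1).eval v.1|) = 0 := by
        refine le_antisymm (Real.iSup_le (fun v => ?_) le_rfl)
          (Real.iSup_nonneg fun v => abs_nonneg _)
        have : (reg gstar (κ v.1) (c + p.f v.1 - (κ v.1).eval v.1)).eval v.1
            = (κ v.1).eval v.1 + (c + p.f v.1 - (κ v.1).eval v.1) := by
          rw [eval_reg]
        rw [this]
        have h2 : (regP gstar c p).f v.1 = p.f v.1 + c := rfl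
        rw [h2]
        have : p.f v.1 + c - ((κ v.1).eval v.1 + (c + p.f v.1 - (κ v.1).eval v.1)) = 0 := by
          ring
        rw [this, abs_zero]
      have hB : (⨆ v : intBdry gstar (regP gstar c p),
          bnorm gstar ((fun v => reg gstar (κ v) (c + p.f v - (κ v).eval v)) v.1)) = 0 := by
        refine le_antisymm (Real.iSup_le (fun v => ?_) le_rfl)
          (Real.iSup_nonneg fun v => bnorm_nonneg _ _)
        exact le_of_eq ((hIH v.1 (hsubB v.2)).2.2.2)
      show (⨆ v : intBdry gstar (regP gstar c p), _) + (⨆ v : intBdry gstar (regP gstar c p), _) = (0:ℝ)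
      rw [hA, hB, add_zero]

theorem mem_closure_reg {gstar M c : ℝ} {h : BHM d} (hv : Valid M gstar h)
    {x : EuclideanSpace ℝ (Fin d)} (hx : x ∈ closure h.dom)
    (hlt : h.eval x + c < gstar) : x ∈ closure (reg gstar h c).dom := by
  cases h with
  | base p => exact mem_closure_regP hv.1 hx hlt
  | node p κ => exact mem_closure_regP hv.1 hx hlt

/-- The unbranched majorant constantly equal to `g*` on the unit ball. -/
def starBHM (d : ℕ) (gstar : ℝ) : BHM d :=
  base ⟨ball (0 : EuclideanSpace ℝ (Fin d)) 1, fun _ => gstar⟩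

theorem starBHM_mem {g : EuclideanSpace ℝ (Fin d) → ℝ} {gstar M : ℝ}
    (hgs : ∀ u, g u < gstar) (n : ℕ) {ε : ℝ} (hε : 0 < ε) :
    starBHM d gstar ∈ admissible g gstar M (n + 1) ε := by
  have hop : IsOpen (ball (0 : EuclideanSpace ℝ (Fin d)) 1) := isOpen_ball
  refine ⟨⟨⟨hop, le_refl _, ⟨contDiffOn_const, fun u hu => ?_⟩, continuousOn_const,
      fun u _ v _ => by simp, fun _ _ => le_refl _⟩, ?_⟩, Depth.base _ n,
      fun u _ => (hgs u).le, by simpa [starBHM, bnorm] using hε⟩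
  · have huniq : UniqueDiffOn ℝ (ball (0 : EuclideanSpace ℝ (Fin d)) 1) :=
      hop.uniqueDiffOn
    have hzero : iteratedFDerivWithin ℝ 2 (fun _ : EuclideanSpace ℝ (Fin d) => gstar)
        (ball (0 : EuclideanSpace ℝ (Fin d)) 1) u = 0 :=
      congrFun (iteratedFDerivWithin_const_of_ne two_ne_zero gstar _) u
    simp [hzero]
  · intro u hu
    exfalso
    have h1 : u ∈ frontier (ball (0 : EuclideanSpace ℝ (Fin d)) 1) := hu.1
    rw [frontier_ball (0 : EuclideanSpace ℝ (Fin d)) one_ne_zero] at h1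
    have h2 := hu.2
    rw [mem_ball, dist_zero_right] at h2
    rw [mem_sphere, dist_zero_right] at h1
    linarith

end BHM

theorem ereal_add_cancel (a : EReal) (r : ℝ) : a + (r : EReal) + ((-r : ℝ) : EReal) = a := by
  induction a using EReal.rec with
  | bot => rw [EReal.bot_add, EReal.bot_add]
  | coe a => rw [← EReal.coe_add, ← EReal.coe_add]; norm_num
  | top => rw [EReal.top_add_coe, EReal.top_add_coe]

theorem ereal_le_of_forall_add (L W : EReal)
    (h : ∀ ε : ℝ, 0 < ε → L ≤ W + (ε : EReal)) : L ≤ W := by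
  induction W using EReal.rec with
  | bot => simpa using h 1 one_pos
  | top => exact le_top
  | coe w =>
    induction L using EReal.rec with
    | bot => exact bot_le
    | top =>
      have := h 1 one_pos
      rw [← EReal.coe_add] at this
      exact absurd (top_le_iff.mp this) (EReal.coe_ne_top _)
    | coe l =>
      have hlw : ∀ ε : ℝ, 0 < ε → l ≤ w + ε := by
        intro ε hε
        have := h ε hε
        rw [← EReal.coe_add] at this
        exact_mod_cast this
      refine EReal.coe_le_coe_iff.2 ?_
      by_contra hcon
      push_neg at hcon
      have := hlw ((l - w) / 2) (by linarith)
      linarith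

end Aux

/-- the limit envelope `inf_n w_n` coincides with the envelope taken over
the full branched class `H_∞` (with matching error tending to zero; the limit as
`ε → 0` of the decreasing-in-`ε` infima is their supremum over `ε > 0`). -/
theorem limit_envelope_eq_envelope_over_union {d : ℕ} (hd : 2 ≤ d)
    (g : EuclideanSpace ℝ (Fin d) → ℝ)
    (hgc : Continuous g) (hg0 : ∀ u, 0 ≤ g u)
    (hsupp : IsCompact (tsupport g))
    (hsuppΛ : tsupport g ⊆ ball (0 : EuclideanSpace ℝ (Fin d)) 1)
    (gstar : ℝ) (hgs : ∀ u, g u < gstar) (M : ℝ) (hM : 0 < M)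
    (w : ℕ → EuclideanSpace ℝ (Fin d) → EReal)
    (hw : ∀ n x, w n x = ⨆ (ε : ℝ) (_ : 0 < ε),
      ⨅ h ∈ admissible g gstar M n ε, BHM.evalE h x)
    (winfty : EuclideanSpace ℝ (Fin d) → EReal)
    (hwinfty : ∀ x, winfty x = ⨆ (ε : ℝ) (_ : 0 < ε),
      ⨅ h ∈ admissibleInfty g gstar M ε, BHM.evalE h x) :
    ∀ x ∈ ball (0 : EuclideanSpace ℝ (Fin d)) 1,
      (⨅ n : ℕ, w n x) = winfty x := by
  intro x hx
  have hgs0 : (0 : ℝ) ≤ gstar := le_of_lt (lt_of_le_of_lt (hg0 0) (hgs 0))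
  refine le_antisymm ?_ ?_
  · -- `⨅ n, w n x ≤ winfty x`, via continuous regularisation
    refine ereal_le_of_forall_add _ _ fun ε hε => ?_
    have key : ∀ h ∈ admissibleInfty g gstar M ε,
        (⨅ n : ℕ, w n x) ≤ BHM.evalE h x + (ε : EReal) := by
      rintro h ⟨hval, ⟨n, hdep⟩, hdom, hbn⟩
      refine (iInf_le _ n).trans ?_
      rw [hw]
      refine iSup₂_le fun ε' hε' => ?_
      by_cases hxcl : x ∈ closure h.dom
      · have hev : BHM.evalE h x = ((h.eval x : ℝ) : EReal) := if_pos hxcl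
        set c := BHM.bnorm gstar h with hcdef
        have hc0 : 0 ≤ c := BHM.bnorm_nonneg gstar h
        rcases lt_or_ge (h.eval x + c) gstar with hlt | hge
        · have spec := BHM.reg_spec hg0 hgs0 hdep hval hdom c hc0 le_rfl
          have hmem : BHM.reg gstar h c ∈ admissible g gstar M n ε' :=
            ⟨spec.1, spec.2.2.1, spec.2.1, by rw [spec.2.2.2]; exact hε'⟩
          refine (iInf₂_le _ hmem).trans ?_
          have hxcl' : x ∈ closure (BHM.reg gstar h c).dom :=
            BHM.mem_closure_reg hval hxcl hlt
          have hev' : BHM.evalE (BHM.reg gstar h c) x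
              = (((BHM.reg gstar h c).eval x : ℝ) : EReal) := if_pos hxcl'
          rw [hev', hev, BHM.eval_reg, ← EReal.coe_add]
          refine EReal.coe_le_coe_iff.2 ?_
          show h.eval x + c ≤ h.eval x + ε
          linarith
        · have hmem : BHM.starBHM d gstar ∈ admissible g gstar M n ε' := by
            obtain ⟨m, rfl⟩ := hdep.pos
            exact BHM.starBHM_mem hgs m hε'
          refine (iInf₂_le _ hmem).trans ?_
          have hxcl' : x ∈ closure (BHM.starBHM d gstar).dom := subset_closure hx
          have hev' : BHM.evalE (BHM.starBHM d gstar) x = ((gstar : ℝ) : EReal) :=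
            if_pos hxcl'
          rw [hev', hev, ← EReal.coe_add]
          refine EReal.coe_le_coe_iff.2 ?_
          linarith
      · have hev : BHM.evalE h x = ⊤ := if_neg hxcl
        rw [hev, EReal.top_add_coe]
        exact le_top
    have h1 : (⨅ n : ℕ, w n x) + ((-ε : ℝ) : EReal)
        ≤ ⨅ h ∈ admissibleInfty g gstar M ε, BHM.evalE h x := by
      refine le_iInf₂ fun h hh => ?_
      calc (⨅ n : ℕ, w n x) + ((-ε : ℝ) : EReal)
          ≤ (BHM.evalE h x + (ε : EReal)) + ((-ε : ℝ) : EReal) :=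
            add_le_add_left (key h hh) _
        _ = BHM.evalE h x := ereal_add_cancel _ ε
    have h2 : (⨅ h ∈ admissibleInfty g gstar M ε, BHM.evalE h x) ≤ winfty x := by
      rw [hwinfty]
      exact le_iSup₂ (f := fun (ε : ℝ) (_ : 0 < ε) =>
        ⨅ h ∈ admissibleInfty g gstar M ε, BHM.evalE h x) ε hε
    calc (⨅ n : ℕ, w n x)
        = (⨅ n : ℕ, w n x) + ((-ε : ℝ) : EReal) + ((ε : ℝ) : EReal) := by
          have := ereal_add_cancel (⨅ n : ℕ, w n x) (-ε)
          rw [neg_neg] at this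
          exact this.symm
      _ ≤ winfty x + (ε : EReal) := add_le_add_left (h1.trans h2) _
  · -- `winfty x ≤ ⨅ n, w n x`, since `H_n ⊆ H_∞`
    refine le_iInf fun n => ?_
    rw [hwinfty, hw]
    refine iSup_mono fun ε => ?_
    refine iSup_mono fun hε => ?_
    exact le_iInf₂ fun h hh => iInf₂_le h ⟨hh.1, ⟨n, hh.2.1⟩, hh.2.2.1, hh.2.2.2⟩
end
end
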